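/- Let x : [t₀,∞) → ℝ be a differentiable function with x(t) ≥ 0 satisfying the differential inequality x'(t) ≤ 1 - 2x(t)/(x(t) + c) for all t ≥ t₀, where c > 0. Then sup_{t ≥ t₀} x(t) ≤ max{c, x(t₀)}. -/

import Mathlib

open Set

theorem stmt4 (x : ℝ → ℝ) (t₀ c : ℝ)
    (hc : 0 < c)
    (hx0 : ∀ t, t₀ ≤ t → 0 ≤ x t)
    (hdiff : ∀ t, t₀ ≤ t → DifferentiableAt ℝ x t)
    (hineq : ∀ t, t₀ ≤ t → deriv x t ≤ 1 - 2 * x t / (x t + c)) :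
    ∀ t, t₀ ≤ t → x t ≤ max c (x t₀) := by
  intro t ht
  set M := max c (x t₀) with hM
  refine le_of_forall_pos_le_add ?_
  intro ε hε
  have key : ∀ ⦃u⦄, u ∈ Icc t₀ t → x u ≤ (fun _ : ℝ => M + ε) u := by
    refine image_le_of_deriv_right_lt_deriv_boundary
      (f' := deriv x) (B' := fun _ => 0)
      (fun u hu => ((hdiff u hu.1).continuousAt).continuousWithinAt)
      (fun u hu => ((hdiff u hu.1).hasDerivAt).hasDerivWithinAt)
      ?_ (fun _ => hasDerivAt_const _ _) ?_
    · have : x t₀ ≤ M := le_max_right _ _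
      linarith
    · intro u hu hxu
      have hu0 : t₀ ≤ u := hu.1
      have hxc : c < x u := by
        have : c ≤ M := le_max_left _ _
        linarith
      have hden : 0 < x u + c := by linarith [hx0 u hu0]
      have : 1 - 2 * x u / (x u + c) < 0 := by
        rw [sub_neg, lt_div_iff₀ hden]
        linarith
      exact lt_of_le_of_lt (hineq u hu0) this
  exact key ⟨ht, le_refl _⟩
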